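/- Let G be a bipartite graph with bipartition (A,B) and minimum degree at least 4, admitting a 3-dimensional consistent separating representation {<_1,<_2,<_3} that is A-homogeneous. Then a contradiction follows; i.e., no such graph exists. -/
import Mathlib


/-- Disjoint edges `vw` and `xy` are separated in the ordering given by an injective
function `f` if all endpoints of one precede all endpoints of the other. -/
def Separates {V : Type*} (f : V → ℕ) (v w x y : V) : Prop :=
  (f v < f x ∧ f v < f y ∧ f w < f x ∧ f w < f y) ∨
  (f x < f v ∧ f x < f w ∧ f y < f v ∧ f y < f w)

/-- `f` is a separating representation of `G`: a family of linear orderings of `V(G)`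
(injective functions to `ℕ`) such that every pair of disjoint edges is separated in
some ordering. -/
def IsSepRep {V : Type*} (G : SimpleGraph V) {k : ℕ} (f : Fin k → V → ℕ) : Prop :=
  (∀ i, Function.Injective (f i)) ∧
  ∀ ⦃v w x y : V⦄, G.Adj v w → G.Adj x y → v ≠ x → v ≠ y → w ≠ x → w ≠ y →
    ∃ i, Separates (f i) v w x y

/-- `f` is a strongly separating representation of `G`: separating, and in addition for
every edge `vw` and vertex `x ∉ {v,w}` some ordering has `x` before both `v,w` and some
ordering has `x` after both `v,w`. -/
def IsStrongSepRep {V : Type*} (G : SimpleGraph V) {k : ℕ} (f : Fin k → V → ℕ) : Prop :=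
  IsSepRep G f ∧
  ∀ ⦃v w x : V⦄, G.Adj v w → x ≠ v → x ≠ w →
    (∃ i, f i x < f i v ∧ f i x < f i w) ∧ (∃ j, f j v < f j x ∧ f j w < f j x)

/-- The separation dimension of `G`: the minimum size of a (nonempty) separating
representation of `G`. -/
noncomputable def sepDim {V : Type*} (G : SimpleGraph V) : ℕ :=
  sInf {k | 1 ≤ k ∧ ∃ f : Fin k → V → ℕ, IsSepRep G f}

/-- The strong separation dimension of `G`: the minimum size of a (nonempty) strongly
separating representation of `G`. -/
noncomputable def strongSepDim {V : Type*} (G : SimpleGraph V) : ℕ :=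
  sInf {k | 1 ≤ k ∧ ∃ f : Fin k → V → ℕ, IsStrongSepRep G f}

/-- No bipartite graph with bipartition `(A, B)` and minimum degree at least 4 admits a
3-dimensional consistent separating representation that is `A`-homogeneous. -/
theorem no_homogeneous_min_degree_four {V : Type*} [Fintype V] [Nonempty V] [DecidableEq V]
    (G : SimpleGraph V) [DecidableRel G.Adj] (A B : Set V)
    (hdisj : Disjoint A B) (hcover : A ∪ B = Set.univ)
    (hbip : ∀ v w : V, G.Adj v w → (v ∈ A ∧ w ∈ B) ∨ (v ∈ B ∧ w ∈ A))
    (hmindeg : ∀ v, 4 ≤ G.degree v)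
    (f : Fin 3 → V → ℕ) (hrep : IsSepRep G f)
    (hcons : ∀ v w : V, G.Adj v w → v ∈ A → w ∈ B → ∀ i, f i v < f i w)
    (hhomog : ∃ a : Fin 3 → Bool, ∀ v ∈ A, ∃ r : V → ℕ,
      Set.InjOn r (G.neighborSet v) ∧
      ∀ (i : Fin 3) (w x : V), G.Adj v w → G.Adj v x →
        (a i = true → (f i w < f i x ↔ r w < r x)) ∧
        (a i = false → (f i w < f i x ↔ r x < r w))) :
    False := by
  classical
  obtain ⟨a, ha⟩ := hhomog
  -- pigeonhole: some index k₀ such that all other indices have the same sign b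
  obtain ⟨k₀, b, hk⟩ : ∃ k₀ : Fin 3, ∃ b : Bool, ∀ ℓ, ℓ ≠ k₀ → a ℓ = b := by
    have pg : ∀ a : Fin 3 → Bool, ∃ k₀ : Fin 3, ∃ b : Bool, ∀ ℓ, ℓ ≠ k₀ → a ℓ = b := by
      decide
    exact pg a
  have hAB : ∀ {v w : V}, G.Adj v w → v ∈ A → w ∈ B := by
    intro v w hvw hv
    rcases hbip v w hvw with ⟨_, h⟩ | ⟨h, _⟩
    · exact h
    · exact absurd h (Set.disjoint_left.mp hdisj hv)
  have hBA : ∀ {v w : V}, G.Adj v w → v ∈ B → w ∈ A := by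
    intro v w hvw hv
    rcases hbip v w hvw with ⟨h, _⟩ | ⟨_, h⟩
    · exact absurd hv (Set.disjoint_left.mp hdisj h)
    · exact h
  have hcard : ∀ v : V, 1 < (G.neighborFinset v).card := by
    intro v
    have := hmindeg v
    rw [← SimpleGraph.card_neighborFinset_eq_degree] at this
    omega
  -- the step lemma
  have key : ∀ v ∈ A, ∃ v', v' ∈ A ∧ f k₀ v < f k₀ v' := by
    intro v hv
    obtain ⟨r, hrinj, hr⟩ := ha v hv
    have hne : (G.neighborFinset v).Nonempty :=
      Finset.card_pos.mp (by have := hcard v; omega)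
    -- extreme neighbor u
    obtain ⟨u, hu_mem, hu_ext⟩ : ∃ u ∈ G.neighborFinset v,
        ∀ w ∈ G.neighborFinset v, w ≠ u → ∀ ℓ, ℓ ≠ k₀ → f ℓ w < f ℓ u := by
      cases b with
      | true =>
        obtain ⟨u, hu, hmax⟩ := Finset.exists_max_image (G.neighborFinset v) r hne
        refine ⟨u, hu, fun w hw hwu ℓ hℓ => ?_⟩
        have hadu : G.Adj v u := (SimpleGraph.mem_neighborFinset _ _ _).mp hu
        have hadw : G.Adj v w := (SimpleGraph.mem_neighborFinset _ _ _).mp hw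
        have hrw : r w < r u :=
          lt_of_le_of_ne (hmax w hw) (fun h => hwu (hrinj hadw hadu h))
        exact ((hr ℓ w u hadw hadu).1 (hk ℓ hℓ)).mpr hrw
      | false =>
        obtain ⟨u, hu, hmin⟩ := Finset.exists_min_image (G.neighborFinset v) r hne
        refine ⟨u, hu, fun w hw hwu ℓ hℓ => ?_⟩
        have hadu : G.Adj v u := (SimpleGraph.mem_neighborFinset _ _ _).mp hu
        have hadw : G.Adj v w := (SimpleGraph.mem_neighborFinset _ _ _).mp hw
        have hrw : r u < r w :=
          lt_of_le_of_ne (hmin w hw) (fun h => hwu (hrinj hadw hadu h.symm))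
        exact ((hr ℓ w u hadw hadu).2 (hk ℓ hℓ)).mpr hrw
    have hadu : G.Adj v u := (SimpleGraph.mem_neighborFinset _ _ _).mp hu_mem
    -- pick w ∈ N(v), w ≠ u
    obtain ⟨w, hw_mem, hwu⟩ := Finset.exists_mem_ne (hcard v) u
    have hadw : G.Adj v w := (SimpleGraph.mem_neighborFinset _ _ _).mp hw_mem
    -- pick v' ∈ N(w), v' ≠ v
    obtain ⟨v', hv'_mem, hv'v⟩ := Finset.exists_mem_ne (hcard w) v
    have hadv' : G.Adj w v' := (SimpleGraph.mem_neighborFinset _ _ _).mp hv'_mem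
    have hwB : w ∈ B := hAB hadw hv
    have huB : u ∈ B := hAB hadu hv
    have hv'A : v' ∈ A := hBA hadv' hwB
    have hvv' : v ≠ v' := fun h => hv'v (h.symm)
    have hvw : v ≠ w := fun h => Set.disjoint_left.mp hdisj hv (h ▸ hwB)
    have huv' : u ≠ v' := fun h => Set.disjoint_right.mp hdisj huB (h ▸ hv'A)
    obtain ⟨ℓ, hsep⟩ := hrep.2 hadu hadv'.symm hvv' hvw huv' hwu.symm
    rcases hsep with ⟨h1, h2, h3, h4⟩ | ⟨h1, h2, h3, h4⟩
    · have hℓ : ℓ = k₀ := by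
        by_contra hne'
        exact absurd (hu_ext w hw_mem hwu ℓ hne') (not_lt.mpr (le_of_lt h4))
      exact ⟨v', hv'A, hℓ ▸ h1⟩
    · exact absurd h3 (not_lt.mpr (le_of_lt (hcons v w hadw hv hwB ℓ)))
  -- A is nonempty
  have hA_ne : ∃ x, x ∈ A := by
    obtain ⟨v⟩ := (inferInstance : Nonempty V)
    have h1 : 0 < (G.neighborFinset v).card := lt_trans Nat.zero_lt_one (hcard v)
    obtain ⟨w, hw⟩ := Finset.card_pos.mp h1
    have hadj : G.Adj v w := (SimpleGraph.mem_neighborFinset _ _ _).mp hw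
    rcases hbip v w hadj with ⟨h, _⟩ | ⟨_, h⟩
    · exact ⟨v, h⟩
    · exact ⟨w, h⟩
  obtain ⟨x₀, hx₀⟩ := hA_ne
  set S : Finset V := Finset.univ.filter (· ∈ A) with hS
  have hS_ne : S.Nonempty := ⟨x₀, by simp [hS, hx₀]⟩
  obtain ⟨v, hvS, hvmax⟩ := Finset.exists_max_image S (f k₀) hS_ne
  have hvA : v ∈ A := by simpa [hS] using hvS
  obtain ⟨v', hv'A, hlt⟩ := key v hvA
  have : f k₀ v' ≤ f k₀ v := hvmax v' (by simp [hS, hv'A])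
  omega
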